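/- There is a constant C such that for all positive integers n, n₁, n₂, n₃, the correlation integral c(n,n₁,n₂,n₃) = ∫_B e_n(x) e_{n₁}(x) e_{n₂}(x) e_{n₃}(x) dx satisfies |c(n,n₁,n₂,n₃)| ≤ C · min{n, n₁, n₂, n₃}. -/

import Mathlib

open Real MeasureTheory
open Set

noncomputable abbrev E3 := EuclideanSpace ℝ (Fin 3)

/-- The open unit ball in `ℝ³`. -/
noncomputable def B3 : Set E3 := Metric.ball 0 1

open Classical in
/-- The radial eigenfunction `e_n(x) = sin(nπ|x|)/|x|`, extended by `e_n(0) = nπ`. -/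
noncomputable def eFun (n : ℕ) (x : E3) : ℝ :=
  if x = 0 then n * Real.pi else Real.sin (n * Real.pi * ‖x‖) / ‖x‖

/-- |cos x - 1| ≤ x^2/2 -/
lemma abs_cos_sub_one_le_sq (x : ℝ) : |Real.cos x - 1| ≤ x ^ 2 / 2 := by
  rw [abs_sub_comm, abs_of_nonneg (by linarith [Real.cos_le_one x])]
  linarith [Real.one_sub_sq_div_two_le_cos (x := x)]

lemma abs_cos_sub_one_le_two (x : ℝ) : |Real.cos x - 1| ≤ 2 := by
  rw [abs_sub_comm, abs_of_nonneg (by linarith [Real.cos_le_one x])]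
  linarith [Real.neg_one_le_cos x]

lemma meas_core (L : ℝ) : Measurable (fun y : ℝ => (Real.cos (L * y) - 1) / y ^ 2) := by
  fun_prop

/-- integrable on Ioo 0 p for the scaled core -/
lemma integrableOn_core (L p : ℝ) :
    IntegrableOn (fun y : ℝ => (Real.cos (L * y) - 1) / y ^ 2) (Ioo 0 p) := by
  rcases le_or_gt p 0 with hp | hp
  · rw [Ioo_eq_empty (by intro h; exact absurd (h.trans_le hp) (lt_irrefl 0))]
    · simp
  refine (integrable_const (L ^ 2 / 2) (μ := volume.restrict (Ioo 0 p))).mono'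
      ((meas_core L).aestronglyMeasurable) ?_
  filter_upwards [ae_restrict_mem measurableSet_Ioo] with y hy
  have hy0 : (0:ℝ) < y := hy.1
  rw [Real.norm_eq_abs, abs_div, abs_of_nonneg (by positivity : (0:ℝ) ≤ y ^ 2)]
  rw [div_le_iff₀ (by positivity)]
  calc |Real.cos (L * y) - 1| ≤ (L * y) ^ 2 / 2 := abs_cos_sub_one_le_sq _
    _ = L ^ 2 / 2 * y ^ 2 := by ring

lemma integrableOn_core' (p : ℝ) :
    IntegrableOn (fun u : ℝ => (Real.cos u - 1) / u ^ 2) (Ioo 0 p) :=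
  (integrableOn_core 1 p).congr_fun (fun u _ => by norm_num) measurableSet_Ioo

noncomputable def Hc (p : ℝ) : ℝ := ∫ u in Ioo (0:ℝ) p, (Real.cos u - 1) / u ^ 2

lemma integrableOn_core_Ioi {p : ℝ} (hp : 0 < p) :
    IntegrableOn (fun u : ℝ => (Real.cos u - 1) / u ^ 2) (Ioi p) := by
  refine (((integrableOn_Ioi_rpow_of_lt (by norm_num : (-2:ℝ) < -1) hp).const_mul 2)).mono'
      ((meas_core 1).comp measurable_id |>.aestronglyMeasurable |>.congr ?_) ?_
  · filter_upwards with y; simp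
  · filter_upwards [ae_restrict_mem measurableSet_Ioi] with u hu
    have hu0 : (0:ℝ) < u := hp.trans hu
    have hr : u ^ (-2:ℝ) = (u ^ 2)⁻¹ := by
      rw [show (-2:ℝ) = -((2:ℕ):ℝ) by norm_num, Real.rpow_neg hu0.le, Real.rpow_natCast]
    rw [Real.norm_eq_abs, abs_div, abs_of_nonneg (by positivity : (0:ℝ) ≤ u ^ 2), hr,
      div_eq_mul_inv]
    gcongr
    exact abs_cos_sub_one_le_two u

lemma tail_bound {p : ℝ} (hp : 0 < p) :
    |∫ u in Ioi p, (Real.cos u - 1) / u ^ 2| ≤ 2 / p := by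
  have h1 : |∫ u in Ioi p, (Real.cos u - 1) / u ^ 2|
      ≤ ∫ u in Ioi p, 2 * u ^ (-2:ℝ) := by
    rw [← Real.norm_eq_abs]
    refine norm_integral_le_of_norm_le ((integrableOn_Ioi_rpow_of_lt (by norm_num) hp).const_mul 2) ?_
    filter_upwards [ae_restrict_mem measurableSet_Ioi] with u hu
    have hu0 : (0:ℝ) < u := hp.trans hu
    have hr : u ^ (-2:ℝ) = (u ^ 2)⁻¹ := by
      rw [show (-2:ℝ) = -((2:ℕ):ℝ) by norm_num, Real.rpow_neg hu0.le, Real.rpow_natCast]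
    rw [Real.norm_eq_abs, abs_div, abs_of_nonneg (by positivity : (0:ℝ) ≤ u ^ 2), hr,
      div_eq_mul_inv]
    gcongr
    exact abs_cos_sub_one_le_two u
  have h2 : ∫ u in Ioi p, 2 * u ^ (-2:ℝ) = 2 / p := by
    rw [MeasureTheory.integral_const_mul, integral_Ioi_rpow_of_lt (by norm_num) hp]
    rw [show (-2:ℝ) + 1 = -1 by norm_num, Real.rpow_neg_one]
    field_simp
  linarith [h1, h2.le]

lemma exists_limit : ∃ c : ℝ, ∀ p : ℝ, 1 ≤ p → |Hc p - c| ≤ 2 / p := by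
  refine ⟨Hc 1 + ∫ u in Ioi 1, (Real.cos u - 1) / u ^ 2, fun p hp => ?_⟩
  have key : Hc p - (Hc 1 + ∫ u in Ioi 1, (Real.cos u - 1) / u ^ 2)
      = - ∫ u in Ioi p, (Real.cos u - 1) / u ^ 2 := by
    have e1 : Hc p = Hc 1 + ∫ u in Ioc 1 p, (Real.cos u - 1) / u ^ 2 := by
      unfold Hc
      rw [setIntegral_congr_set (Ioo_ae_eq_Ioc (a := (0:ℝ)) (b := p)), setIntegral_congr_set (Ioo_ae_eq_Ioc (a := (0:ℝ)) (b := (1:ℝ))),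
        ← MeasureTheory.setIntegral_union (Ioc_disjoint_Ioc_of_le le_rfl) measurableSet_Ioc
          ((integrableOn_core' 1).congr_set_ae Ioo_ae_eq_Ioc.symm)
          ((integrableOn_core_Ioi one_pos).mono_set Ioc_subset_Ioi_self),
        Ioc_union_Ioc_eq_Ioc zero_le_one hp]
    have e2 : (∫ u in Ioi 1, (Real.cos u - 1) / u ^ 2)
        = (∫ u in Ioc 1 p, (Real.cos u - 1) / u ^ 2) + ∫ u in Ioi p, (Real.cos u - 1) / u ^ 2 := by
      rw [← MeasureTheory.setIntegral_union (Ioc_disjoint_Ioi le_rfl) measurableSet_Ioi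
          ((integrableOn_core_Ioi one_pos).mono_set Ioc_subset_Ioi_self)
          ((integrableOn_core_Ioi one_pos).mono_set (Ioi_subset_Ioi hp)),
        Ioc_union_Ioi_eq_Ioi hp]
    rw [e1, e2]; ring
  rw [key, abs_neg]
  exact tail_bound (lt_of_lt_of_le one_pos hp)

noncomputable def Gc (L : ℝ) : ℝ := ∫ y in Ioo (0:ℝ) 1, (Real.cos (L * y) - 1) / y ^ 2

lemma Gc_neg (L : ℝ) : Gc (-L) = Gc L := by
  unfold Gc
  congr 1; funext y; rw [neg_mul, Real.cos_neg]

lemma Gc_abs_le (L : ℝ) : |Gc L| ≤ L ^ 2 / 2 := by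
  have h : |Gc L| ≤ ∫ _ in Ioo (0:ℝ) 1, L ^ 2 / 2 := by
    rw [← Real.norm_eq_abs]
    refine norm_integral_le_of_norm_le (integrable_const _) ?_
    filter_upwards [ae_restrict_mem measurableSet_Ioo] with y hy
    have hy0 : (0:ℝ) < y := hy.1
    rw [Real.norm_eq_abs, abs_div, abs_of_nonneg (by positivity : (0:ℝ) ≤ y ^ 2),
      div_le_iff₀ (by positivity)]
    calc |Real.cos (L * y) - 1| ≤ (L * y) ^ 2 / 2 := abs_cos_sub_one_le_sq _
      _ ≤ L ^ 2 / 2 * y ^ 2 := by nlinarith [sq_nonneg (L*y)]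
  rw [setIntegral_const, Real.volume_real_Ioo] at h
  simpa using h

lemma Gc_eq {L : ℝ} (hL : 0 < L) : Gc L = L * Hc L := by
  have h1 : Gc L = ∫ y in (0:ℝ)..1, (Real.cos (L * y) - 1) / y ^ 2 := by
    rw [intervalIntegral.integral_of_le zero_le_one]
    exact setIntegral_congr_set (Ioo_ae_eq_Ioc (a := (0:ℝ)) (b := (1:ℝ)))
  have h2 : ∀ y : ℝ, (Real.cos (L * y) - 1) / y ^ 2
      = L ^ 2 * ((Real.cos (L * y) - 1) / (L * y) ^ 2) := by
    intro y
    by_cases hy : y = 0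
    · simp [hy]
    · field_simp
  rw [h1, intervalIntegral.integral_congr (fun y _ => h2 y),
    intervalIntegral.integral_const_mul,
    intervalIntegral.integral_comp_mul_left (fun u => (Real.cos u - 1) / u ^ 2) hL.ne',
    mul_zero, mul_one, smul_eq_mul]
  have h3 : (∫ u in (0:ℝ)..L, (Real.cos u - 1) / u ^ 2) = Hc L := by
    rw [intervalIntegral.integral_of_le hL.le]
    exact (setIntegral_congr_set (Ioo_ae_eq_Ioc (a := (0:ℝ)) (b := L))).symm
  rw [h3]
  field_simp

lemma exists_K : ∃ K C₀ : ℝ, 0 < C₀ ∧ ∀ L : ℝ, abs (Gc L + K * abs L) ≤ C₀ := by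
  obtain ⟨c, hc⟩ := exists_limit
  refine ⟨-c, |c| + 5/2, by positivity, fun L => ?_⟩
  have key : ∀ M : ℝ, 0 ≤ M → |Gc M + -c * M| ≤ |c| + 5/2 := by
    intro M hM
    rcases le_or_gt M 1 with h1 | h1
    · have := Gc_abs_le M
      have hcM : |(-c) * M| ≤ |c| := by
        rw [abs_mul, abs_neg]
        nlinarith [abs_nonneg c, abs_nonneg M, abs_of_nonneg hM]
      calc |Gc M + -c * M| ≤ |Gc M| + |(-c) * M| := abs_add_le _ _
        _ ≤ |c| + 5/2 := by nlinarith
    · have hM0 : (0:ℝ) < M := lt_trans one_pos h1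
      have := hc M h1.le
      have heq : Gc M + -c * M = M * (Hc M - c) := by
        rw [Gc_eq hM0]; ring
      rw [heq, abs_mul, abs_of_nonneg hM0.le]
      have : M * |Hc M - c| ≤ M * (2 / M) := by
        apply mul_le_mul_of_nonneg_left (hc M h1.le) hM0.le
      rw [mul_div_cancel₀ 2 hM0.ne'] at this
      linarith [abs_nonneg c]
  rcases le_or_gt 0 L with h | h
  · rw [abs_of_nonneg h]; exact key L h
  · rw [abs_of_neg h, ← Gc_neg L]
    exact key (-L) (by linarith)

lemma sin4_identity (a b c d y : ℝ) :
    Real.sin (a*y) * Real.sin (b*y) * Real.sin (c*y) * Real.sin (d*y) =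
    (1/8) * ((Real.cos ((a-b-c+d)*y) + Real.cos ((a-b+c-d)*y) + Real.cos ((a+b-c-d)*y)
        + Real.cos ((a+b+c+d)*y))
      - (Real.cos ((a-b-c-d)*y) + Real.cos ((a-b+c+d)*y) + Real.cos ((a+b-c+d)*y)
        + Real.cos ((a+b+c-d)*y))) := by
  simp only [sub_mul, add_mul, Real.cos_add, Real.cos_sub, Real.sin_add, Real.sin_sub]
  ring

lemma pair_bound_add (x y t : ℝ) (h : x + y = 2 * t) : abs (|x| - |y|) ≤ 2 * |t| := by
  have h1 := abs_abs_sub_abs_le_abs_sub x (-y)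
  rw [abs_neg] at h1
  have h2 : x - -y = 2 * t := by linarith
  rw [h2, abs_mul] at h1
  simpa using h1

lemma pair_bound_sub (x y t : ℝ) (h : x - y = 2 * t) : abs (|x| - |y|) ≤ 2 * |t| := by
  have h1 := abs_abs_sub_abs_le_abs_sub x y
  rw [h, abs_mul] at h1
  simpa using h1

lemma T_bound (a b c d : ℝ) (ha : 0 ≤ a) (hb : 0 ≤ b) (hc : 0 ≤ c) (hd : 0 ≤ d) :
    abs ((|a-b-c+d| + |a-b+c-d| + |a+b-c-d| + |a+b+c+d|)
       - (|a-b-c-d| + |a-b+c+d| + |a+b-c+d| + |a+b+c-d|))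
      ≤ 8 * min (min a b) (min c d) := by
  have Ta : abs ((|a-b-c+d| + |a-b+c-d| + |a+b-c-d| + |a+b+c+d|)
       - (|a-b-c-d| + |a-b+c+d| + |a+b-c+d| + |a+b+c-d|)) ≤ 8 * a := by
    have h1 := pair_bound_add (a-b-c+d) (a+b+c-d) a (by ring)
    have h2 := pair_bound_add (a-b+c-d) (a+b-c+d) a (by ring)
    have h3 := pair_bound_add (a+b-c-d) (a-b+c+d) a (by ring)
    have h4 := pair_bound_add (a+b+c+d) (a-b-c-d) a (by ring)
    rw [abs_of_nonneg ha] at h1 h2 h3 h4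
    rw [abs_le] at h1 h2 h3 h4 ⊢
    constructor <;> linarith
  have Tb : abs ((|a-b-c+d| + |a-b+c-d| + |a+b-c-d| + |a+b+c+d|)
       - (|a-b-c-d| + |a-b+c+d| + |a+b-c+d| + |a+b+c-d|)) ≤ 8 * b := by
    have h1 := pair_bound_sub (a-b-c+d) (a+b-c+d) (-b) (by ring)
    have h2 := pair_bound_sub (a-b+c-d) (a+b+c-d) (-b) (by ring)
    have h3 := pair_bound_sub (a+b-c-d) (a-b-c-d) b (by ring)
    have h4 := pair_bound_sub (a+b+c+d) (a-b+c+d) b (by ring)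
    rw [abs_neg] at h1 h2
    rw [abs_of_nonneg hb] at h1 h2 h3 h4
    rw [abs_le] at h1 h2 h3 h4 ⊢
    constructor <;> linarith
  have Tc : abs ((|a-b-c+d| + |a-b+c-d| + |a+b-c-d| + |a+b+c+d|)
       - (|a-b-c-d| + |a-b+c+d| + |a+b-c+d| + |a+b+c-d|)) ≤ 8 * c := by
    have h1 := pair_bound_sub (a-b-c+d) (a-b+c+d) (-c) (by ring)
    have h2 := pair_bound_sub (a-b+c-d) (a-b-c-d) c (by ring)
    have h3 := pair_bound_sub (a+b-c-d) (a+b+c-d) (-c) (by ring)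
    have h4 := pair_bound_sub (a+b+c+d) (a+b-c+d) c (by ring)
    rw [abs_neg] at h1 h3
    rw [abs_of_nonneg hc] at h1 h2 h3 h4
    rw [abs_le] at h1 h2 h3 h4 ⊢
    constructor <;> linarith
  have Td : abs ((|a-b-c+d| + |a-b+c-d| + |a+b-c-d| + |a+b+c+d|)
       - (|a-b-c-d| + |a-b+c+d| + |a+b-c+d| + |a+b+c-d|)) ≤ 8 * d := by
    have h1 := pair_bound_sub (a-b-c+d) (a-b-c-d) d (by ring)
    have h2 := pair_bound_sub (a-b+c-d) (a-b+c+d) (-d) (by ring)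
    have h3 := pair_bound_sub (a+b-c-d) (a+b-c+d) (-d) (by ring)
    have h4 := pair_bound_sub (a+b+c+d) (a+b+c-d) d (by ring)
    rw [abs_neg] at h2 h3
    rw [abs_of_nonneg hd] at h1 h2 h3 h4
    rw [abs_le] at h1 h2 h3 h4 ⊢
    constructor <;> linarith
  rcases min_cases (min a b) (min c d) with ⟨h, _⟩ | ⟨h, _⟩ <;> rw [h]
  · rcases min_cases a b with ⟨h', _⟩ | ⟨h', _⟩ <;> rw [h']
    · exact Ta
    · exact Tb
  · rcases min_cases c d with ⟨h', _⟩ | ⟨h', _⟩ <;> rw [h']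
    · exact Tc
    · exact Td

lemma J_eq (a b c d : ℝ) :
    ∫ y in Ioo (0:ℝ) 1,
        Real.sin (a*y) * Real.sin (b*y) * Real.sin (c*y) * Real.sin (d*y) / y ^ 2
    = (1/8) * ((Gc (a-b-c+d) + Gc (a-b+c-d) + Gc (a+b-c-d) + Gc (a+b+c+d))
             - (Gc (a-b-c-d) + Gc (a-b+c+d) + Gc (a+b-c+d) + Gc (a+b+c-d))) := by
  have I1 := integrableOn_core (a-b-c+d) 1
  have I2 := integrableOn_core (a-b+c-d) 1
  have I3 := integrableOn_core (a+b-c-d) 1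
  have I4 := integrableOn_core (a+b+c+d) 1
  have I5 := integrableOn_core (a-b-c-d) 1
  have I6 := integrableOn_core (a-b+c+d) 1
  have I7 := integrableOn_core (a+b-c+d) 1
  have I8 := integrableOn_core (a+b+c-d) 1
  have key : ∫ y in Ioo (0:ℝ) 1,
        Real.sin (a*y) * Real.sin (b*y) * Real.sin (c*y) * Real.sin (d*y) / y ^ 2
      = ∫ y in Ioo (0:ℝ) 1, (1/8) *
        (((Real.cos ((a-b-c+d)*y) - 1)/y^2 + (Real.cos ((a-b+c-d)*y) - 1)/y^2
          + (Real.cos ((a+b-c-d)*y) - 1)/y^2 + (Real.cos ((a+b+c+d)*y) - 1)/y^2)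
        - ((Real.cos ((a-b-c-d)*y) - 1)/y^2 + (Real.cos ((a-b+c+d)*y) - 1)/y^2
          + (Real.cos ((a+b-c+d)*y) - 1)/y^2 + (Real.cos ((a+b+c-d)*y) - 1)/y^2)) := by
    refine setIntegral_congr_fun measurableSet_Ioo (fun y hy => ?_)
    have hy0 : y ≠ 0 := ne_of_gt hy.1
    rw [sin4_identity]
    field_simp
    ring
  rw [key, MeasureTheory.integral_const_mul]
  congr 1
  have eSub := integral_sub (((I1.add I2).add I3).add I4) (((I5.add I6).add I7).add I8)
  have e12 := integral_add I1 I2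
  have e123 := integral_add (I1.add I2) I3
  have e1234 := integral_add ((I1.add I2).add I3) I4
  have e56 := integral_add I5 I6
  have e567 := integral_add (I5.add I6) I7
  have e5678 := integral_add ((I5.add I6).add I7) I8
  simp only [Pi.add_apply] at eSub e12 e123 e1234 e56 e567 e5678
  rw [eSub, e1234, e123, e12, e5678, e567, e56]
  rfl

lemma radial_bound : ∃ C1 C2 : ℝ, 0 < C1 ∧ 0 ≤ C2 ∧ ∀ a b c d : ℝ,
    0 ≤ a → 0 ≤ b → 0 ≤ c → 0 ≤ d →
    |∫ y in Ioo (0:ℝ) 1,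
        Real.sin (a*y) * Real.sin (b*y) * Real.sin (c*y) * Real.sin (d*y) / y ^ 2|
      ≤ C1 + C2 * min (min a b) (min c d) := by
  obtain ⟨K, C₀, hC₀, hK⟩ := exists_K
  refine ⟨C₀, |K|, hC₀, abs_nonneg K, fun a b c d ha hb hc hd => ?_⟩
  rw [J_eq]
  set m := min (min a b) (min c d) with hm
  have h1 := hK (a-b-c+d); have h2 := hK (a-b+c-d); have h3 := hK (a+b-c-d)
  have h4 := hK (a+b+c+d); have h5 := hK (a-b-c-d); have h6 := hK (a-b+c+d)
  have h7 := hK (a+b-c+d); have h8 := hK (a+b+c-d)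
  have hT := T_bound a b c d ha hb hc hd
  have hKT : abs (K * ((|a-b-c+d| + |a-b+c-d| + |a+b-c-d| + |a+b+c+d|)
       - (|a-b-c-d| + |a-b+c+d| + |a+b-c+d| + |a+b+c-d|))) ≤ |K| * (8 * m) := by
    rw [abs_mul]
    exact mul_le_mul_of_nonneg_left hT (abs_nonneg K)
  rw [abs_le] at h1 h2 h3 h4 h5 h6 h7 h8 hKT ⊢
  constructor <;> linarith [h1.1, h1.2, h2.1, h2.2, h3.1, h3.2, h4.1, h4.2, h5.1, h5.2,
    h6.1, h6.2, h7.1, h7.2, h8.1, h8.2, hKT.1, hKT.2]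

lemma intB_eq (n n₁ n₂ n₃ : ℕ) :
    (∫ x in B3, eFun n x * eFun n₁ x * eFun n₂ x * eFun n₃ x)
    = (3:ℕ) • (volume (Metric.ball (0:E3) 1)).toReal •
        ∫ y in Ioo (0:ℝ) 1, Real.sin ((n*π)*y) * Real.sin ((n₁*π)*y)
          * Real.sin ((n₂*π)*y) * Real.sin ((n₃*π)*y) / y ^ 2 := by
  set f : ℝ → ℝ := Set.indicator (Ioo 0 1)
    (fun r => Real.sin ((n*π)*r) * Real.sin ((n₁*π)*r)
      * Real.sin ((n₂*π)*r) * Real.sin ((n₃*π)*r) / r ^ 4) with hf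
  have hae : ∀ᵐ x : E3, x ≠ 0 := by
    rw [MeasureTheory.ae_iff]
    simpa using MeasureTheory.measure_singleton (0 : E3)
  have hA : (∫ x in B3, eFun n x * eFun n₁ x * eFun n₂ x * eFun n₃ x)
      = ∫ x : E3, f ‖x‖ := by
    rw [show B3 = Metric.ball (0:E3) 1 from rfl,
      ← MeasureTheory.integral_indicator (Metric.isOpen_ball.measurableSet)]
    refine integral_congr_ae ?_
    filter_upwards [hae] with x hx
    have hnorm : 0 < ‖x‖ := norm_pos_iff.2 hx
    by_cases hb : ‖x‖ < 1
    · have hmem : x ∈ Metric.ball (0:E3) 1 := by rw [Metric.mem_ball, dist_zero_right]; exact hb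
      rw [Set.indicator_of_mem hmem, hf,
        Set.indicator_of_mem (Set.mem_Ioo.2 ⟨hnorm, hb⟩)]
      simp only [eFun, if_neg hx]
      rw [div_mul_div_comm, div_mul_div_comm, div_mul_div_comm]
      congr 1 <;> ring
    · have hmem : x ∉ Metric.ball (0:E3) 1 := by rw [Metric.mem_ball, dist_zero_right]; exact hb
      rw [Set.indicator_of_notMem hmem, hf,
        Set.indicator_of_notMem (fun hc => hb (Set.mem_Ioo.1 hc).2)]
  have hB := MeasureTheory.integral_fun_norm_addHaar (volume : Measure E3) f
  have hdim : Module.finrank ℝ E3 = 3 := finrank_euclideanSpace_fin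
  rw [hdim] at hB
  rw [hA, hB]
  congr 1
  congr 1
  have hpt : ∀ y : ℝ, y ^ (3-1) • f y
      = Set.indicator (Ioo (0:ℝ) 1) (fun r => r ^ 2 *
          (Real.sin ((n*π)*r) * Real.sin ((n₁*π)*r)
            * Real.sin ((n₂*π)*r) * Real.sin ((n₃*π)*r) / r ^ 4)) y := by
    intro y
    by_cases hy : y ∈ Ioo (0:ℝ) 1
    · rw [hf, Set.indicator_of_mem hy, Set.indicator_of_mem hy, smul_eq_mul]
    · rw [hf, Set.indicator_of_notMem hy, Set.indicator_of_notMem hy, smul_eq_mul, mul_zero]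
  rw [integral_congr_ae (Filter.Eventually.of_forall hpt),
    MeasureTheory.setIntegral_indicator measurableSet_Ioo,
    Set.inter_eq_right.2 Set.Ioo_subset_Ioi_self]
  refine setIntegral_congr_fun measurableSet_Ioo (fun y hy => ?_)
  have hy0 : y ≠ 0 := ne_of_gt hy.1
  field_simp

theorem correlation_bound :
    ∃ C > 0, ∀ n n₁ n₂ n₃ : ℕ, 1 ≤ n → 1 ≤ n₁ → 1 ≤ n₂ → 1 ≤ n₃ →
      |∫ x in B3, eFun n x * eFun n₁ x * eFun n₂ x * eFun n₃ x| ≤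
        C * (min (min n n₁) (min n₂ n₃) : ℕ) := by
  obtain ⟨C1, C2, hC1, hC2, hrad⟩ := radial_bound
  set V := (volume (Metric.ball (0:E3) 1)).toReal with hV
  have hVpos : 0 < V := by
    refine ENNReal.toReal_pos (ne_of_gt (Metric.measure_ball_pos volume 0 one_pos)) ?_
    exact (MeasureTheory.measure_ball_lt_top).ne
  refine ⟨3 * V * (C1 + C2 * π), by positivity, fun n n₁ n₂ n₃ hn hn₁ hn₂ hn₃ => ?_⟩
  rw [intB_eq n n₁ n₂ n₃]
  set M : ℝ := ((min (min n n₁) (min n₂ n₃) : ℕ) : ℝ) with hM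
  have hM1 : 1 ≤ M := by
    rw [hM]
    exact_mod_cast le_min (le_min hn hn₁) (le_min hn₂ hn₃)
  have hJ := hrad ((n:ℝ)*π) ((n₁:ℝ)*π) ((n₂:ℝ)*π) ((n₃:ℝ)*π)
    (by positivity) (by positivity) (by positivity) (by positivity)
  have hminπ : min (min ((n:ℝ)*π) ((n₁:ℝ)*π)) (min ((n₂:ℝ)*π) ((n₃:ℝ)*π)) = M * π := by
    rw [hM]
    push_cast
    rw [min_mul_of_nonneg _ _ Real.pi_pos.le, min_mul_of_nonneg _ _ Real.pi_pos.le,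
      min_mul_of_nonneg _ _ Real.pi_pos.le]
  rw [hminπ] at hJ
  rw [nsmul_eq_mul, smul_eq_mul, Nat.cast_ofNat, abs_mul, abs_mul,
    abs_of_nonneg (by norm_num : (0:ℝ) ≤ 3), abs_of_nonneg hVpos.le]
  have hstep : C1 + C2 * (M * π) ≤ (C1 + C2 * π) * M := by
    nlinarith [mul_nonneg hC1.le (by linarith : (0:ℝ) ≤ M - 1),
      mul_nonneg hC2 Real.pi_pos.le]
  calc 3 * (V * |∫ y in Ioo (0:ℝ) 1, Real.sin ((n:ℝ)*π*y) * Real.sin ((n₁:ℝ)*π*y)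
          * Real.sin ((n₂:ℝ)*π*y) * Real.sin ((n₃:ℝ)*π*y) / y ^ 2|)
      ≤ 3 * (V * (C1 + C2 * (M * π))) := by
        gcongr
    _ ≤ 3 * (V * ((C1 + C2 * π) * M)) := by
        gcongr
    _ = 3 * V * (C1 + C2 * π) * M := by ring
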